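/- Let K be a field, R a unital amenable affine K-algebra with a fixed Følner exhaustion {W_n}, ω a nonprincipal ultrafilter on ℕ. Let 0 → M → N → N/M → 0 be an exact sequence of finitely generated left R-modules (M a submodule of N), and let X = {x_1, …, x_r} be a system of generators for N containing a system of generators for M. Define the relative rank rank_X(M) = lim_ω dim_K(M ∩ (W_nx_1 + ⋯ + W_nx_r))/dim_K(W_n). Then rank(N) = rank(N/M) + rank_X(M). -/
import Mathlib


open Filter Module

/-- `W·r`: the image of the finite dimensional subspace `W` under right multiplication
by `r`. -/
noncomputable def rightMulSubmodule (K : Type*) [Field K] {R : Type*} [Ring R] [Algebra K R]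
    (W : Submodule K R) (r : R) : Submodule K R :=
  W.map (LinearMap.mulRight K r)

/-- A Følner exhaustion of a `K`-algebra `R`: an increasing sequence of finite dimensional
subspaces exhausting `R` such that for every `r ∈ R`,
`dim (Wₙ·r + Wₙ) / dim Wₙ → 1`. -/
def FolnerExhaustion (K : Type*) [Field K] (R : Type*) [Ring R] [Algebra K R]
    (W : ℕ → Submodule K R) : Prop :=
  Monotone W ∧ (∀ n, FiniteDimensional K (W n)) ∧ (∀ x : R, ∃ n, x ∈ W n) ∧
    ∀ r : R,
      Tendsto (fun n => (finrank K ↥(rightMulSubmodule K (W n) r ⊔ W n) : ℝ) / finrank K (W n))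
        atTop (nhds 1)

/-- An affine algebra is (left) amenable if it admits a Følner exhaustion. -/
def AmenableAlgebra (K : Type*) [Field K] (R : Type*) [Ring R] [Algebra K R] : Prop :=
  ∃ W : ℕ → Submodule K R, FolnerExhaustion K R W


/-- The ultralimit of a real sequence along an ultrafilter `ω`: the limit of the sequence
along `ω` (for bounded sequences this limit exists and is unique). -/
noncomputable def ultralim (ω : Ultrafilter ℕ) (f : ℕ → ℝ) : ℝ :=
  limUnder (ω : Filter ℕ) f

/-- The sequence `n ↦ dim_K(Wₙx₁ + ⋯ + Wₙx_r) / dim_K(Wₙ)` attached to a family of elements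
`x₁, …, x_r` of a left `R`-module `M`, where `Wₙ·x = {wx : w ∈ Wₙ}`. -/
noncomputable def rankSeq (K : Type*) [Field K] (R : Type*) [Ring R] [Algebra K R]
    (W : ℕ → Submodule K R) {M : Type*} [AddCommGroup M] [Module K M] [Module R M]
    [IsScalarTower K R M] {r : ℕ} (x : Fin r → M) (n : ℕ) : ℝ :=
  (finrank K ↥(⨆ i, (W n).map ((LinearMap.toSpanSingleton R M (x i)).restrictScalars K)) : ℝ) /
    finrank K (W n)


section Aux

open Submodule LinearMap

private lemma finrank_map_add_inf_ker {K V V₂ : Type*} [Field K] [AddCommGroup V] [Module K V]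
    [AddCommGroup V₂] [Module K V₂] (p : Submodule K V) [FiniteDimensional K p]
    (f : V →ₗ[K] V₂) :
    finrank K ↥(p.map f) + finrank K ↥(p ⊓ LinearMap.ker f) = finrank K ↥p := by
  have h := LinearMap.finrank_range_add_finrank_ker (f.domRestrict p)
  rw [LinearMap.range_domRestrict, LinearMap.ker_domRestrict] at h
  rwa [← Submodule.finrank_map_subtype_eq p ((LinearMap.ker f).comap p.subtype),
    Submodule.map_comap_subtype] at h

private lemma finrank_finset_sup_le {K V : Type*} [Field K] [AddCommGroup V] [Module K V]
    {ι : Type*} (s : Finset ι) (p : ι → Submodule K V) [∀ i, FiniteDimensional K (p i)] :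
    finrank K ↥(s.sup p) ≤ ∑ i ∈ s, finrank K ↥(p i) := by
  classical
  induction s using Finset.induction with
  | empty => simp
  | @insert a s hni ih =>
    rw [Finset.sup_insert, Finset.sum_insert hni]
    calc finrank K ↥(p a ⊔ s.sup p) ≤ finrank K ↥(p a) + finrank K ↥(s.sup p) :=
          Submodule.finrank_add_le_finrank_add_finrank _ _
    _ ≤ _ := by omega

private lemma finrank_iSup_fin_le {K V : Type*} [Field K] [AddCommGroup V] [Module K V]
    {r : ℕ} (p : Fin r → Submodule K V) [∀ i, FiniteDimensional K (p i)] :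
    finrank K ↥(⨆ i, p i) ≤ ∑ i, finrank K ↥(p i) := by
  rw [← Finset.sup_univ_eq_iSup]
  exact finrank_finset_sup_le _ _

private lemma exists_ultralim {ω : Ultrafilter ℕ} {f : ℕ → ℝ} {C : ℝ}
    (h : ∀ n, f n ∈ Set.Icc (0:ℝ) C) : ∃ a, Tendsto f (ω : Filter ℕ) (nhds a) := by
  have hle : ↑(ω.map f) ≤ Filter.principal (Set.Icc (0:ℝ) C) := by
    rw [Ultrafilter.coe_map]
    exact Filter.le_principal_iff.2 (Filter.mem_map.2 (Filter.univ_mem' h))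
  obtain ⟨a, -, ha⟩ := (isCompact_Icc (a := (0:ℝ)) (b := C)).ultrafilter_le_nhds (ω.map f) hle
  rw [Ultrafilter.coe_map] at ha
  exact ⟨a, ha⟩

end Aux

/-- For an exact sequence `0 → M → N → N/M → 0` of finitely generated modules, with a
generating system `X = {x₁, …, x_r}` of `N` containing a generating system of `M`,
`rank N = rank (N/M) + rank_X M`, where
`rank_X M = lim_ω dim_K (M ∩ (Wₙx₁ + ⋯ + Wₙx_r)) / dim_K Wₙ` is the relative rank. -/
theorem rank_exact_sequence (K : Type*) [Field K] (R : Type*) [Ring R] [Algebra K R]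
    [Algebra.FiniteType K R]
    (W : ℕ → Submodule K R) (hW : FolnerExhaustion K R W)
    (ω : Ultrafilter ℕ) (hω : (ω : Filter ℕ) ≤ Filter.cofinite)
    (N : Type*) [AddCommGroup N] [Module K N] [Module R N] [IsScalarTower K R N]
    (M : Submodule R N) {r : ℕ} (x : Fin r → N)
    (hx : Submodule.span R (Set.range x) = ⊤)
    (s : Set (Fin r)) (hsM : ∀ i ∈ s, x i ∈ M)
    (hsgen : Submodule.span R (x '' s) = M) :
    ultralim ω (rankSeq K R W x) =
      ultralim ω (rankSeq K R W fun i => M.mkQ (x i)) +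
      ultralim ω (fun n =>
        (finrank K ↥(M.restrictScalars K ⊓
          ⨆ i, (W n).map ((LinearMap.toSpanSingleton R N (x i)).restrictScalars K)) : ℝ) /
          finrank K (W n)) := by
  classical
  haveI := fun n => hW.2.1 n
  set V : ℕ → Submodule K N := fun n =>
    ⨆ i, (W n).map ((LinearMap.toSpanSingleton R N (x i)).restrictScalars K) with hV
  haveI hfd : ∀ n, FiniteDimensional K (V n) := fun n => by
    unfold V; infer_instance
  set g : ℕ → ℝ := rankSeq K R W (fun i => M.mkQ (x i)) with hg
  set h : ℕ → ℝ := fun n =>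
    (finrank K ↥(M.restrictScalars K ⊓ V n) : ℝ) / finrank K (W n) with hh
  have key : ∀ n, rankSeq K R W x n = g n + h n := by
    intro n
    set q : N →ₗ[K] N ⧸ M := M.mkQ.restrictScalars K with hq
    have hmap : (V n).map q =
        ⨆ i, (W n).map ((LinearMap.toSpanSingleton R (N ⧸ M) (M.mkQ (x i))).restrictScalars K) := by
      rw [hV, Submodule.map_iSup]
      refine iSup_congr fun i => ?_
      rw [← Submodule.map_comp]
      have hc : q.comp ((LinearMap.toSpanSingleton R N (x i)).restrictScalars K) =
          (LinearMap.toSpanSingleton R (N ⧸ M) (M.mkQ (x i))).restrictScalars K := by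
        ext w
        simp [q, LinearMap.toSpanSingleton_apply]
      rw [hc]
    have hker : LinearMap.ker q = M.restrictScalars K := by
      rw [hq, LinearMap.ker_restrictScalars, Submodule.ker_mkQ]
    have hrn := finrank_map_add_inf_ker (V n) q
    rw [hmap, hker, inf_comm] at hrn
    have e1 : rankSeq K R W x n = (finrank K ↥(V n) : ℝ) / finrank K (W n) := rfl
    rw [e1, ← hrn]
    push_cast
    rw [add_div]
    rfl
  have bound : ∀ (u : ℕ → ℕ), (∀ n, u n ≤ r * finrank K (W n)) →
      ∀ n, ((u n : ℝ) / finrank K (W n)) ∈ Set.Icc (0:ℝ) r := by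
    intro u hu n
    rcases Nat.eq_zero_or_pos (finrank K (W n)) with h0 | h0
    · simp [h0, Nat.cast_pos.mpr, r.cast_nonneg]
    · have hd : (0:ℝ) < finrank K (W n) := by exact_mod_cast h0
      constructor
      · positivity
      · rw [div_le_iff₀ hd]
        calc (u n : ℝ) ≤ ((r * finrank K (W n) : ℕ) : ℝ) := by exact_mod_cast hu n
        _ = r * finrank K (W n) := by push_cast; ring
  have hVle : ∀ n, finrank K ↥(V n) ≤ r * finrank K (W n) := by
    intro n
    calc finrank K ↥(V n)
        ≤ ∑ i : Fin r, finrank K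
            ↥((W n).map ((LinearMap.toSpanSingleton R N (x i)).restrictScalars K)) :=
          finrank_iSup_fin_le _
      _ ≤ ∑ _i : Fin r, finrank K (W n) :=
          Finset.sum_le_sum fun i _ => Submodule.finrank_map_le _ _
      _ = r * finrank K (W n) := by simp [Finset.sum_const, mul_comm]
  have gbnd : ∀ n, g n ∈ Set.Icc (0:ℝ) r := by
    refine bound _ (fun n => ?_)
    calc finrank K ↥(⨆ i, (W n).map
          ((LinearMap.toSpanSingleton R (N ⧸ M) (M.mkQ (x i))).restrictScalars K))
        ≤ ∑ i : Fin r, finrank K ↥((W n).map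
          ((LinearMap.toSpanSingleton R (N ⧸ M) (M.mkQ (x i))).restrictScalars K)) :=
          finrank_iSup_fin_le _
      _ ≤ ∑ _i : Fin r, finrank K (W n) :=
          Finset.sum_le_sum fun i _ => Submodule.finrank_map_le _ _
      _ = r * finrank K (W n) := by simp [Finset.sum_const, mul_comm]
  have hbnd : ∀ n, h n ∈ Set.Icc (0:ℝ) r := by
    refine bound _ (fun n => ?_)
    exact le_trans (Submodule.finrank_mono inf_le_right) (hVle n)
  obtain ⟨a, ha⟩ := exists_ultralim gbnd
  obtain ⟨b, hb⟩ := exists_ultralim hbnd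
  have hab : Tendsto (rankSeq K R W x) (ω : Filter ℕ) (nhds (a + b)) :=
    (ha.add hb).congr fun n => (key n).symm
  rw [ultralim, ultralim, ultralim, hab.limUnder_eq, ha.limUnder_eq, hb.limUnder_eq]
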